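/- For λ > 0, γ > 1, if λ < |y| < γλ, then g = (γ/(γ-1))(|y| - λ)·sign(y) minimizes the function g ↦ (1/2)(g - y)² + h_{γ,λ}(g) over ℝ. -/

import Mathlib

noncomputable def mcp (γ lam y : ℝ) : ℝ :=
  if |y| ≤ γ * lam then lam * |y| - y ^ 2 / (2 * γ) else lam ^ 2 * γ / 2

theorem mcp_prox_case2 (lam γ y : ℝ) (hlam : 0 < lam) (hγ : 1 < γ)
    (hy1 : lam < |y|) (hy2 : |y| < γ * lam) :
    IsMinOn (fun g => (g - y) ^ 2 / 2 + mcp γ lam g) Set.univ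
      (γ / (γ - 1) * (|y| - lam) * Real.sign y) := by
  have hγ0 : (0:ℝ) < γ - 1 := by linarith
  have hγp : (0:ℝ) < γ := by linarith
  have hy0 : y ≠ 0 := by
    intro h; rw [h, abs_zero] at hy1; linarith
  have hsy : Real.sign y * y = |y| := by
    rcases hy0.lt_or_gt with h | h
    · rw [Real.sign_of_neg h, abs_of_neg h]; ring
    · rw [Real.sign_of_pos h, abs_of_pos h]; ring
  have hs2 : Real.sign y * Real.sign y = 1 := by
    rcases hy0.lt_or_gt with h | h
    · rw [Real.sign_of_neg h]; ring
    · rw [Real.sign_of_pos h]; ring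
  set s := Real.sign y with hsdef
  set b := γ / (γ - 1) * (|y| - lam) with hbdef
  have hb : b * (γ - 1) = γ * (|y| - lam) := by
    rw [hbdef]; field_simp
  have hbpos : 0 < b := by
    apply mul_pos (div_pos hγp hγ0); linarith
  have habs_s : |s| = 1 := by
    rcases hy0.lt_or_gt with h | h
    · rw [hsdef, Real.sign_of_neg h]; norm_num
    · rw [hsdef, Real.sign_of_pos h]; norm_num
  have hgstar_abs : |b * s| = b := by
    rw [abs_mul, habs_s, mul_one, abs_of_pos hbpos]
  have hble : b ≤ γ * lam := by
    rw [hbdef, div_mul_eq_mul_div, div_le_iff₀ hγ0]; nlinarith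
  have e1 : (b * s - y) ^ 2 = b ^ 2 - 2 * b * |y| + y ^ 2 := by
    linear_combination b ^ 2 * hs2 - 2 * b * hsy
  have e2 : (b * s) ^ 2 = b ^ 2 := by
    linear_combination b ^ 2 * hs2
  clear_value s b
  clear hsdef hbdef
  intro g _
  simp only [mcp, hgstar_abs, if_pos hble, e1, e2]
  have hgy : g * y ≤ |g| * |y| := (le_abs_self _).trans (abs_mul g y).le
  have hgsq : g ^ 2 = |g| ^ 2 := (sq_abs g).symm
  simp only [Set.mem_setOf_eq]
  rcases le_or_gt |g| (γ * lam) with hg | hg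
  · rw [if_pos hg]
    have hid : (g - y) ^ 2 / 2 + (lam * |g| - g ^ 2 / (2 * γ))
        - ((b ^ 2 - 2 * b * |y| + y ^ 2) / 2 + (lam * b - b ^ 2 / (2 * γ)))
        = ((γ - 1) * (|g| - b) ^ 2 + 2 * γ * (|g| * |y| - g * y)) / (2 * γ) := by
      rw [hgsq]
      have hγne : γ ≠ 0 := ne_of_gt hγp
      field_simp
      ring_nf
      linear_combination (2 * (|g| - b)) * hb + γ * hgsq
    have hnum : 0 ≤ (γ - 1) * (|g| - b) ^ 2 + 2 * γ * (|g| * |y| - g * y) := by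
      have := sq_nonneg (|g| - b); nlinarith
    have := div_nonneg hnum (by linarith : (0:ℝ) ≤ 2 * γ)
    linarith
  · rw [if_neg (not_le.mpr hg)]
    have hid : (g - y) ^ 2 / 2 + lam ^ 2 * γ / 2
        - ((b ^ 2 - 2 * b * |y| + y ^ 2) / 2 + (lam * b - b ^ 2 / (2 * γ)))
        = ((γ - 1) * (|g| - b) ^ 2 + 2 * γ * (|g| * |y| - g * y) + (|g| - γ * lam) ^ 2) / (2 * γ) := by
      rw [show (g - y) ^ 2 = g ^ 2 - 2 * (g * y) + y ^ 2 by ring, hgsq]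
      have hγne : γ ≠ 0 := ne_of_gt hγp
      field_simp
      ring_nf
      linear_combination (2 * (|g| - b)) * hb
    have hnum : 0 ≤ (γ - 1) * (|g| - b) ^ 2 + 2 * γ * (|g| * |y| - g * y) + (|g| - γ * lam) ^ 2 := by
      have := sq_nonneg (|g| - b); have := sq_nonneg (|g| - γ * lam); nlinarith
    have := div_nonneg hnum (by linarith : (0:ℝ) ≤ 2 * γ)
    linarith
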